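/- Let ℓ: [0,1] × {0,1} → [−1,1] be a loss of bounded variation (ℓ ∈ L_BV), let p*: X → [0,1] be a predictor, let f: X → [0,1] be any measurable function, let g be a group with P_g > 0, and let ε > 0. Then |E_{(x,y)~D}[(y − p*(x))·Δℓ(f(x)) | g(x)=1]| ≤ 9·sup_{v ∈ [0,1]} |E_{(x,y)~D}[(y − p*(x))·1[f(x) ≤ v] | g(x)=1]| + ε·√(1/P_g). -/

import Mathlib

open MeasureTheory ProbabilityTheory Set

noncomputable section

/-- Real value of a Boolean label. -/
def lab (y : Bool) : ℝ := if y then 1 else 0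

/-- Conditional expectation of `f` under `D`, given that the group membership
function `g` evaluates to `true` on the context. -/
def condE {X : Type*} [MeasurableSpace X] (D : Measure (X × Bool)) (g : X → Bool)
    (f : X × Bool → ℝ) : ℝ :=
  ∫ z, f z ∂(D[|{z : X × Bool | g z.1 = true}])

/-- Probability of group `g` under `D`. -/
def Pg {X : Type*} [MeasurableSpace X] (D : Measure (X × Bool)) (g : X → Bool) : ℝ :=
  (D {z : X × Bool | g z.1 = true}).toReal

/-- The set of all partition sums `∑ |f(z_{j+1}) - f(z_j)|` over finite partitions
`0 = z_0 < z_1 < ⋯ < z_m = 1` of `[0,1]`.  `V(f) ≤ C` iff every element is `≤ C`. -/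
def partitionSums (f : ℝ → ℝ) : Set ℝ :=
  {S | ∃ (m : ℕ) (z : ℕ → ℝ), z 0 = 0 ∧ z m = 1 ∧ (∀ i < m, z i < z (i + 1)) ∧
      S = ∑ i ∈ Finset.range m, |f (z (i + 1)) - f (z i)|}

def chainSum (G : ℝ → ℝ) (u : ℕ → ℝ) (n : ℕ) : ℝ :=
  ∑ i ∈ Finset.range n, |G (u (i + 1)) - G (u i)|

lemma exists_strict_chain (G : ℝ → ℝ) (n : ℕ) (u : ℕ → ℝ) (hu : Monotone u)
    (hmem : ∀ i, u i ∈ Icc (0:ℝ) 1) :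
    ∃ (k : ℕ) (w : ℕ → ℝ), (∀ i < k, w i < w (i + 1)) ∧ (∀ i, w i ∈ Icc (0:ℝ) 1) ∧
      w k = u n ∧ chainSum G u n ≤ chainSum G w k := by
  induction n with
  | zero =>
    exact ⟨0, u, fun i hi => absurd hi (Nat.not_lt_zero i), hmem, rfl, le_rfl⟩
  | succ n ih =>
    obtain ⟨k, w, hws, hwm, hwe, hle⟩ := ih
    have hsum : chainSum G u (n + 1) = chainSum G u n + |G (u (n + 1)) - G (u n)| :=
      Finset.sum_range_succ _ n
    rcases eq_or_lt_of_le (hu (Nat.le_succ n)) with heq | hlt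
    · refine ⟨k, w, hws, hwm, by rw [hwe, heq], ?_⟩
      rw [hsum, ← heq]
      simpa using hle
    · refine ⟨k + 1, fun i => if i ≤ k then w i else u (n + 1), ?_, ?_, ?_, ?_⟩
      · intro i hi
        show (if i ≤ k then w i else u (n + 1)) < (if i + 1 ≤ k then w (i + 1) else u (n + 1))
        rcases Nat.lt_or_ge i k with h | h
        · rw [if_pos h.le, if_pos (by omega : i + 1 ≤ k)]
          exact hws i h
        · have hik : i = k := by omega
          rw [if_pos (by omega : i ≤ k), if_neg (by omega : ¬ i + 1 ≤ k), hik, hwe]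
          exact hlt
      · intro i
        by_cases h : i ≤ k
        · simpa [h] using hwm i
        · simpa [h] using hmem (n + 1)
      · simp
      · have h1 : chainSum G (fun i => if i ≤ k then w i else u (n + 1)) (k + 1) =
            chainSum G w k + |G (u (n + 1)) - G (u n)| := by
          rw [chainSum, Finset.sum_range_succ]
          congr 1
          · apply Finset.sum_congr rfl
            intro i hi
            have hi' := Finset.mem_range.mp hi
            rw [if_pos (by omega : i ≤ k), if_pos (by omega : i + 1 ≤ k)]
          · rw [if_pos le_rfl, if_neg (by omega : ¬ k + 1 ≤ k), hwe]
        rw [hsum, h1]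
        linarith

lemma strict_chain_le_partitionSums (G : ℝ → ℝ) (k : ℕ) (w : ℕ → ℝ)
    (hws : ∀ i < k, w i < w (i + 1)) (hwm : ∀ i, w i ∈ Icc (0:ℝ) 1) :
    ∃ S ∈ partitionSums G, chainSum G w k ≤ S := by
  obtain ⟨k2, w2, hws2, hwm2, hend2, hle2⟩ :
      ∃ (k2 : ℕ) (w2 : ℕ → ℝ), (∀ i < k2, w2 i < w2 (i + 1)) ∧ (∀ i, w2 i ∈ Icc (0:ℝ) 1) ∧
        w2 k2 = 1 ∧ chainSum G w k ≤ chainSum G w2 k2 := by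
    by_cases h1 : w k = 1
    · exact ⟨k, w, hws, hwm, h1, le_rfl⟩
    · refine ⟨k + 1, fun i => if i ≤ k then w i else 1, ?_, ?_, ?_, ?_⟩
      · intro i hi
        show (if i ≤ k then w i else 1) < (if i + 1 ≤ k then w (i + 1) else 1)
        rcases Nat.lt_or_ge i k with h | h
        · rw [if_pos h.le, if_pos (by omega : i + 1 ≤ k)]
          exact hws i h
        · have hik : i = k := by omega
          rw [if_pos (by omega : i ≤ k), if_neg (by omega : ¬ i + 1 ≤ k), hik]
          exact lt_of_le_of_ne (hwm k).2 h1
      · intro i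
        by_cases h : i ≤ k
        · simpa [h] using hwm i
        · simp [h]
      · simp
      · have h1 : chainSum G (fun i => if i ≤ k then w i else 1) (k + 1) =
            chainSum G w k + |G 1 - G (w k)| := by
          rw [chainSum, Finset.sum_range_succ]
          congr 1
          · apply Finset.sum_congr rfl
            intro i hi
            have hi' := Finset.mem_range.mp hi
            rw [if_pos (by omega : i ≤ k), if_pos (by omega : i + 1 ≤ k)]
          · rw [if_pos le_rfl, if_neg (by omega : ¬ k + 1 ≤ k)]
        rw [h1]
        have := abs_nonneg (G 1 - G (w k))
        linarith
  by_cases h0 : w2 0 = 0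
  · exact ⟨chainSum G w2 k2, ⟨k2, w2, h0, hend2, hws2, rfl⟩, hle2⟩
  · refine ⟨chainSum G (fun i => if i = 0 then 0 else w2 (i - 1)) (k2 + 1),
      ⟨k2 + 1, fun i => if i = 0 then 0 else w2 (i - 1), rfl, by simp [hend2], ?_, rfl⟩, ?_⟩
    · intro i hi
      show (if i = 0 then 0 else w2 (i - 1)) < (if i + 1 = 0 then 0 else w2 (i + 1 - 1))
      rcases Nat.eq_zero_or_pos i with h | h
      · subst h
        rw [if_pos rfl, if_neg (by omega : ¬ (0:ℕ) + 1 = 0)]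
        exact lt_of_le_of_ne (hwm2 0).1 (fun h => h0 h.symm)
      · rw [if_neg (by omega : ¬ i = 0), if_neg (by omega : ¬ i + 1 = 0),
          (by omega : i + 1 - 1 = i - 1 + 1)]
        exact hws2 (i - 1) (by omega)
    · have hsum : chainSum G (fun i => if i = 0 then 0 else w2 (i - 1)) (k2 + 1) =
          (∑ i ∈ Finset.range k2, |G (w2 (i + 1)) - G (w2 i)|) +
            |G ((fun i => if i = 0 then 0 else w2 (i - 1)) 1) -
              G ((fun i => if i = 0 then 0 else w2 (i - 1)) 0)| := by
        rw [chainSum, Finset.sum_range_succ' _ k2]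
        congr 1
      rw [hsum]
      have := abs_nonneg (G ((fun i => if i = 0 then 0 else w2 (i - 1)) 1) -
        G ((fun i => if i = 0 then 0 else w2 (i - 1)) 0))
      have h2 : chainSum G w2 k2 = ∑ i ∈ Finset.range k2, |G (w2 (i + 1)) - G (w2 i)| := rfl
      linarith

lemma chainSum_le_one (G : ℝ → ℝ) (hBV : ∀ S ∈ partitionSums G, S ≤ 1)
    (n : ℕ) (u : ℕ → ℝ) (hu : Monotone u) (hmem : ∀ i, u i ∈ Icc (0:ℝ) 1) :
    chainSum G u n ≤ 1 := by
  obtain ⟨k, w, hws, hwm, _, hle⟩ := exists_strict_chain G n u hu hmem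
  obtain ⟨S, hS, hle2⟩ := strict_chain_le_partitionSums G k w hws hwm
  exact hle.trans (hle2.trans (hBV S hS))

lemma evar_bound (ℓ : ℝ → Bool → ℝ)
    (hLBV : ∀ y : Bool, ∀ S ∈ partitionSums (fun q => ℓ q y), S ≤ 1) :
    eVariationOn (fun q => ℓ q true - ℓ q false) (Icc (0:ℝ) 1) ≤ ENNReal.ofReal 2 := by
  apply iSup_le
  rintro ⟨n, u, hu, us⟩
  have h1 : ∑ i ∈ Finset.range n,
      edist ((fun q => ℓ q true - ℓ q false) (u (i + 1))) ((fun q => ℓ q true - ℓ q false) (u i)) =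
      ENNReal.ofReal (chainSum (fun q => ℓ q true - ℓ q false) u n) := by
    rw [chainSum, ENNReal.ofReal_sum_of_nonneg (fun i _ => abs_nonneg _)]
    apply Finset.sum_congr rfl
    intro i _
    rw [edist_dist, Real.dist_eq]
  rw [h1]
  apply ENNReal.ofReal_le_ofReal
  have h2 : chainSum (fun q => ℓ q true - ℓ q false) u n ≤
      chainSum (fun q => ℓ q true) u n + chainSum (fun q => ℓ q false) u n := by
    rw [chainSum, chainSum, chainSum, ← Finset.sum_add_distrib]
    apply Finset.sum_le_sum
    intro i _
    have : (ℓ (u (i + 1)) true - ℓ (u (i + 1)) false) - (ℓ (u i) true - ℓ (u i) false) =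
        (ℓ (u (i + 1)) true - ℓ (u i) true) - (ℓ (u (i + 1)) false - ℓ (u i) false) := by ring
    rw [this]
    exact abs_sub _ _
  have ht := chainSum_le_one (fun q => ℓ q true) (hLBV true) n u hu us
  have hf := chainSum_le_one (fun q => ℓ q false) (hLBV false) n u hu us
  linarith

section MeasureLemmas

variable {Ω : Type*} [MeasurableSpace Ω] (μ : Measure Ω) [IsFiniteMeasure μ]

lemma integrable_bdd {h : Ω → ℝ} (hm : Measurable h) {C : ℝ} (hC : ∀ z, |h z| ≤ C) :
    Integrable h μ :=
  Integrable.mono' (integrable_const C) hm.aestronglyMeasurable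
    (ae_of_all _ fun z => by simpa [Real.norm_eq_abs] using hC z)

lemma strict_thr {w F : Ω → ℝ} (hw : Measurable w) (hwb : ∀ z, |w z| ≤ 1)
    (hF : Measurable F) {K : ℝ}
    (hthr : ∀ v : ℝ, |∫ z, w z * (if F z ≤ v then 1 else 0) ∂μ| ≤ K) (v : ℝ) :
    |∫ z, w z * (if F z < v then 1 else 0) ∂μ| ≤ K := by
  have hconv : Filter.Tendsto
      (fun n : ℕ => ∫ z, w z * (if F z ≤ v - 1 / (n + 1) then 1 else 0) ∂μ)
      Filter.atTop (nhds (∫ z, w z * (if F z < v then 1 else 0) ∂μ)) := by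
    apply tendsto_integral_of_dominated_convergence (fun _ => (1:ℝ))
    · intro n
      apply Measurable.aestronglyMeasurable
      exact hw.mul (Measurable.ite (hF (measurableSet_Iic (a := v - 1 / (n + 1))))
        measurable_const measurable_const)
    · exact integrable_const 1
    · intro n
      apply ae_of_all
      intro z
      have := hwb z
      rw [Real.norm_eq_abs, abs_mul]
      split <;> simp <;> nlinarith [abs_nonneg (w z)]
    · apply ae_of_all
      intro z
      rcases lt_or_ge (F z) v with h | h
      · have hlim : Filter.Tendsto (fun n : ℕ => v - 1 / (n + 1 : ℝ)) Filter.atTop (nhds v) := by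
          have := tendsto_one_div_add_atTop_nhds_zero_nat (𝕜 := ℝ)
          simpa using Filter.Tendsto.const_sub v this
        have hev : ∀ᶠ n : ℕ in Filter.atTop,
            w z * 1 = w z * (if F z ≤ v - 1 / (n + 1) then 1 else 0) := by
          filter_upwards [hlim.eventually (eventually_ge_nhds
            (by linarith : (F z + v) / 2 < v))] with n hn
          rw [if_pos (by linarith)]
        rw [if_pos h]
        exact Filter.Tendsto.congr' hev tendsto_const_nhds
      · have hz : ∀ n : ℕ, w z * (if F z ≤ v - 1 / (n + 1) then 1 else 0) = w z * 0 := by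
          intro n
          rw [if_neg (by
            push_neg
            have h1 : (0:ℝ) < 1 / (n + 1) := by positivity
            linarith)]
        rw [if_neg (not_lt.mpr h)]
        simp only [hz]
        exact tendsto_const_nhds
  exact le_of_tendsto hconv.abs (Filter.Eventually.of_forall fun n => hthr _)

lemma mono_piece {w F : Ω → ℝ} (hw : Measurable w) (hwb : ∀ z, |w z| ≤ 1)
    (hF : Measurable F) (hFr : ∀ z, F z ∈ Icc (0:ℝ) 1)
    (u : ℝ → ℝ) (hu : Monotone u) {K : ℝ} (hK0 : 0 ≤ K)
    (hthr : ∀ v : ℝ, |∫ z, w z * (if F z ≤ v then 1 else 0) ∂μ| ≤ K) :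
    |∫ z, w z * u (F z) ∂μ - u 1 * ∫ z, w z ∂μ| ≤ (u 1 - u 0) * K := by
  have hsthr := strict_thr μ hw hwb hF hthr
  set a0 := u 0 with ha0
  set a1 := u 1 with ha1
  have ha : a0 ≤ a1 := hu zero_le_one
  set ν := volume.restrict (Ioc a0 a1) with hν
  haveI : IsFiniteMeasure ν := by
    constructor
    rw [hν, Measure.restrict_apply_univ]
    exact measure_Ioc_lt_top
  have hνuniv : (ν Set.univ).toReal = a1 - a0 := by
    rw [hν, Measure.restrict_apply_univ, Real.volume_Ioc, ENNReal.toReal_ofReal (by linarith)]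
  have hval : ∀ z, u (F z) ∈ Icc a0 a1 := fun z => ⟨hu (hFr z).1, hu (hFr z).2⟩
  have hmeasuF : Measurable fun z => u (F z) := hu.measurable.comp hF
  -- pointwise computation of the inner integral
  have hcompute : ∀ c : ℝ, a0 ≤ c → c ≤ a1 →
      (∫ t, (if c ≤ t then (1:ℝ) else 0) ∂ν) = a1 - c := by
    intro c h0 h1
    have hfi : (fun t : ℝ => if c ≤ t then (1:ℝ) else 0) =
        (Ici c).indicator (fun _ => (1:ℝ)) := by
      funext t
      simp [Set.indicator_apply, Set.mem_Ici]
    rw [hν, hfi]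
    rw [show ∫ t, (Ici c).indicator (fun _ => (1:ℝ)) t ∂volume.restrict (Ioc a0 a1) =
        ∫ t in Ioc a0 a1, (Ici c).indicator (fun _ => (1:ℝ)) t ∂volume from rfl]
    rw [setIntegral_indicator measurableSet_Ici, setIntegral_const]
    rcases eq_or_lt_of_le h0 with heq | hlt
    · have hinter : Ioc a0 a1 ∩ Ici c = Ioc c a1 := by
        subst heq
        exact Set.inter_eq_left.mpr fun t ht => le_of_lt ht.1
      rw [hinter, measureReal_def, Real.volume_Ioc, ENNReal.toReal_ofReal (by linarith)]
      simp
    · have hinter : Ioc a0 a1 ∩ Ici c = Icc c a1 := by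
        ext t
        constructor
        · rintro ⟨⟨_, ht2⟩, ht3⟩
          exact ⟨ht3, ht2⟩
        · rintro ⟨ht1, ht2⟩
          exact ⟨⟨lt_of_lt_of_le hlt ht1, ht2⟩, ht1⟩
      rw [hinter, measureReal_def, Real.volume_Icc, ENNReal.toReal_ofReal (by linarith)]
      simp
  have hptwise : ∀ z, w z * u (F z) - a1 * w z =
      -(∫ t, w z * (if u (F z) ≤ t then 1 else 0) ∂ν) := by
    intro z
    rw [integral_const_mul, hcompute (u (F z)) (hval z).1 (hval z).2]
    ring
  -- bound on the inner integral over z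
  have hB : ∀ t : ℝ, |∫ z, w z * (if u (F z) ≤ t then 1 else 0) ∂μ| ≤ K := by
    intro t
    by_cases hS : {q : ℝ | q ∈ Icc (0:ℝ) 1 ∧ u q ≤ t}.Nonempty
    · have hbdd : BddAbove {q : ℝ | q ∈ Icc (0:ℝ) 1 ∧ u q ≤ t} :=
        BddAbove.mono (fun q hq => hq.1) bddAbove_Icc
      set v := sSup {q : ℝ | q ∈ Icc (0:ℝ) 1 ∧ u q ≤ t} with hv
      by_cases huv : u v ≤ t
      · have heq : ∀ z, w z * (if u (F z) ≤ t then (1:ℝ) else 0) =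
            w z * (if F z ≤ v then 1 else 0) := by
          intro z
          by_cases hz : F z ≤ v
          · rw [if_pos (le_trans (hu hz) huv), if_pos hz]
          · rw [if_neg fun hc => hz (le_csSup hbdd ⟨hFr z, hc⟩), if_neg hz]
        rw [integral_congr_ae (ae_of_all _ heq)]
        exact hthr v
      · have heq : ∀ z, w z * (if u (F z) ≤ t then (1:ℝ) else 0) =
            w z * (if F z < v then 1 else 0) := by
          intro z
          by_cases hz : F z < v
          · obtain ⟨s, hsS, hss⟩ := exists_lt_of_lt_csSup hS hz
            rw [if_pos (le_trans (hu hss.le) hsS.2), if_pos hz]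
          · refine if_neg ?_ ▸ if_neg hz ▸ rfl
            intro hc
            have h1 : F z ≤ v := le_csSup hbdd ⟨hFr z, hc⟩
            have h2 : v ≤ F z := not_lt.mp hz
            exact huv (le_antisymm h1 h2 ▸ hc)
        rw [integral_congr_ae (ae_of_all _ heq)]
        exact hsthr v
    · have heq : ∀ z, w z * (if u (F z) ≤ t then (1:ℝ) else 0) = 0 := by
        intro z
        rw [if_neg fun hc => hS ⟨F z, hFr z, hc⟩, mul_zero]
      rw [integral_congr_ae (ae_of_all _ heq)]
      simpa using hK0
  -- integrability and Fubini
  have hprodmeas : Measurable (Function.uncurry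
      fun (z : Ω) (t : ℝ) => w z * (if u (F z) ≤ t then 1 else 0)) := by
    apply Measurable.mul
    · exact hw.comp measurable_fst
    · exact Measurable.ite (measurableSet_le (hmeasuF.comp measurable_fst) measurable_snd)
        measurable_const measurable_const
  have hprodint : Integrable (Function.uncurry
      fun (z : Ω) (t : ℝ) => w z * (if u (F z) ≤ t then 1 else 0)) (μ.prod ν) := by
    apply integrable_bdd _ hprodmeas (C := 1)
    rintro ⟨z, t⟩
    have := hwb z
    rw [Function.uncurry_apply_pair, abs_mul]
    split <;> simp <;> nlinarith [abs_nonneg (w z)]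
  have hswap : ∫ z, (∫ t, w z * (if u (F z) ≤ t then 1 else 0) ∂ν) ∂μ =
      ∫ t, (∫ z, w z * (if u (F z) ≤ t then 1 else 0) ∂μ) ∂ν :=
    integral_integral_swap hprodint
  -- integrabilities for the subtraction
  have hCu : ∀ z, |u (F z)| ≤ |a0| + |a1| := by
    intro z
    have h2 := hval z
    rw [abs_le]
    exact ⟨by linarith [neg_abs_le a0, abs_nonneg a1, h2.1],
      by linarith [le_abs_self a1, abs_nonneg a0, h2.2]⟩
  have hif : Integrable (fun z => w z * u (F z)) μ := by
    apply integrable_bdd μ (hw.mul hmeasuF) (C := |a0| + |a1|)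
    intro z
    rw [Pi.mul_apply, abs_mul]
    calc |w z| * |u (F z)| ≤ 1 * (|a0| + |a1|) :=
          mul_le_mul (hwb z) (hCu z) (abs_nonneg _) zero_le_one
      _ = |a0| + |a1| := one_mul _
  have hig : Integrable (fun z => a1 * w z) μ :=
    (integrable_bdd μ hw hwb).const_mul a1
  have hmain : ∫ z, w z * u (F z) ∂μ - a1 * ∫ z, w z ∂μ =
      -(∫ t, (∫ z, w z * (if u (F z) ≤ t then 1 else 0) ∂μ) ∂ν) := by
    rw [← integral_const_mul, ← integral_sub hif hig,
      integral_congr_ae (ae_of_all _ hptwise), integral_neg, hswap]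
  rw [hmain, abs_neg]
  calc |∫ t, (∫ z, w z * (if u (F z) ≤ t then 1 else 0) ∂μ) ∂ν|
      = ‖∫ t, (∫ z, w z * (if u (F z) ≤ t then 1 else 0) ∂μ) ∂ν‖ := (Real.norm_eq_abs _).symm
    _ ≤ K * (ν Set.univ).toReal := norm_integral_le_of_norm_le_const
        (ae_of_all _ fun t => by rw [Real.norm_eq_abs]; exact hB t)
    _ = (a1 - a0) * K := by rw [hνuniv]; ring

lemma integrable_mono_comp {w F : Ω → ℝ} (hw : Measurable w) (hwb : ∀ z, |w z| ≤ 1)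
    (hF : Measurable F) (hFr : ∀ z, F z ∈ Icc (0:ℝ) 1) (u : ℝ → ℝ) (hu : Monotone u) :
    Integrable (fun z => w z * u (F z)) μ := by
  apply integrable_bdd μ (hw.mul (hu.measurable.comp hF)) (C := |u 0| + |u 1|)
  intro z
  rw [Pi.mul_apply, abs_mul]
  have h2 : u (F z) ∈ Icc (u 0) (u 1) := ⟨hu (hFr z).1, hu (hFr z).2⟩
  have hCu : |u (F z)| ≤ |u 0| + |u 1| := by
    rw [abs_le]
    exact ⟨by linarith [neg_abs_le (u 0), abs_nonneg (u 1), h2.1],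
      by linarith [le_abs_self (u 1), abs_nonneg (u 0), h2.2]⟩
  calc |w z| * |u (F z)| ≤ 1 * (|u 0| + |u 1|) :=
        mul_le_mul (hwb z) hCu (abs_nonneg _) zero_le_one
    _ = _ := one_mul _

end MeasureLemmas

/-- Approximation lemma: for any bounded-variation loss `ℓ`, predictor
`p⋆`, measurable `f`, group `g` with `P_g > 0`, and `ε > 0`,
`|E[(y - p⋆(x))·Δℓ(f(x)) | g(x)=1]| ≤ 9·sup_v |E[(y - p⋆(x))·1[f(x) ≤ v] | g(x)=1]|
  + ε·√(1/P_g)`. -/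
theorem stmt2 {X : Type*} [MeasurableSpace X]
    (D : Measure (X × Bool)) [IsProbabilityMeasure D]
    (ε : ℝ) (hε : 0 < ε)
    (ℓ : ℝ → Bool → ℝ)
    (hLmeas : ∀ y : Bool, Measurable (fun q => ℓ q y))
    (hLbdd : ∀ q ∈ Icc (0:ℝ) 1, ∀ y : Bool, ℓ q y ∈ Icc (-1:ℝ) 1)
    (hLBV : ∀ y : Bool, ∀ S ∈ partitionSums (fun q => ℓ q y), S ≤ 1)
    (p : X → ℝ) (hpmeas : Measurable p) (hprange : ∀ x, p x ∈ Icc (0:ℝ) 1)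
    (f : X → ℝ) (hfmeas : Measurable f) (hfrange : ∀ x, f x ∈ Icc (0:ℝ) 1)
    (g : X → Bool) (hgmeas : Measurable g) (hgpos : 0 < Pg D g) :
    |condE D g (fun z => (lab z.2 - p z.1) * (ℓ (f z.1) true - ℓ (f z.1) false))| ≤
      9 * sSup ((fun v =>
          |condE D g (fun z => (lab z.2 - p z.1) * (if f z.1 ≤ v then 1 else 0))|) ''
          Icc (0:ℝ) 1) +
        ε * Real.sqrt (1 / Pg D g) := by
  classical
  have hwmeas : Measurable (fun z : X × Bool => lab z.2 - p z.1) :=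
    ((Measurable.of_discrete (f := lab)).comp measurable_snd).sub (hpmeas.comp measurable_fst)
  have hwb : ∀ z : X × Bool, |lab z.2 - p z.1| ≤ 1 := by
    intro z
    have hp := hprange z.1
    rw [abs_le]
    cases z.2 <;> simp [lab] <;> constructor <;> linarith [hp.1, hp.2]
  have hFmeas : Measurable (fun z : X × Bool => f z.1) := hfmeas.comp measurable_fst
  have hFr : ∀ z : X × Bool, f z.1 ∈ Icc (0:ℝ) 1 := fun z => hfrange z.1
  simp only [condE] at *
  set G : Set (X × Bool) := {z : X × Bool | g z.1 = true} with hGdef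
  have hDG : D G ≠ 0 := by
    intro h0
    rw [Pg] at hgpos
    rw [← hGdef] at hgpos
    rw [h0] at hgpos
    simp at hgpos
  haveI hμprob : IsProbabilityMeasure (D[|G]) := cond_isProbabilityMeasure hDG
  set μ := D[|G] with hμdef
  set K := sSup ((fun v => |∫ z, (lab z.2 - p z.1) * (if f z.1 ≤ v then 1 else 0) ∂μ|) ''
    Icc (0:ℝ) 1) with hKdef
  -- the threshold bounds
  have hele : ∀ v : ℝ, |∫ z, (lab z.2 - p z.1) * (if f z.1 ≤ v then 1 else 0) ∂μ| ≤ 1 := by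
    intro v
    calc |∫ z, (lab z.2 - p z.1) * (if f z.1 ≤ v then 1 else 0) ∂μ|
        = ‖∫ z, (lab z.2 - p z.1) * (if f z.1 ≤ v then 1 else 0) ∂μ‖ := (Real.norm_eq_abs _).symm
      _ ≤ 1 * (μ Set.univ).toReal := by
          apply norm_integral_le_of_norm_le_const
          apply ae_of_all
          intro z
          rw [Real.norm_eq_abs, abs_mul]
          have h1 := hwb z
          have h2 : |if f z.1 ≤ v then (1:ℝ) else 0| ≤ 1 := by split <;> simp
          nlinarith [abs_nonneg (lab z.2 - p z.1)]
      _ = 1 := by simp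
  have hbdd : BddAbove ((fun v => |∫ z, (lab z.2 - p z.1) * (if f z.1 ≤ v then 1 else 0) ∂μ|) ''
      Icc (0:ℝ) 1) := by
    refine ⟨1, ?_⟩
    rintro S ⟨v, hv, rfl⟩
    exact hele v
  have hK0 : 0 ≤ K :=
    le_trans (abs_nonneg _) (le_csSup hbdd ⟨0, ⟨le_rfl, zero_le_one⟩, rfl⟩)
  have hthr : ∀ v : ℝ, |∫ z, (lab z.2 - p z.1) * (if f z.1 ≤ v then 1 else 0) ∂μ| ≤ K := by
    intro v
    rcases lt_or_ge v 0 with hv | hv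
    · have hz : ∀ z : X × Bool, (lab z.2 - p z.1) * (if f z.1 ≤ v then (1:ℝ) else 0) = 0 := by
        intro z
        rw [if_neg (by have := (hfrange z.1).1; intro hc; linarith), mul_zero]
      rw [integral_congr_ae (ae_of_all _ hz)]
      simpa using hK0
    rcases le_or_gt v 1 with hv1 | hv1
    · exact le_csSup hbdd ⟨v, ⟨hv, hv1⟩, rfl⟩
    · have hz : ∀ z : X × Bool, (lab z.2 - p z.1) * (if f z.1 ≤ v then (1:ℝ) else 0) =
          (lab z.2 - p z.1) * (if f z.1 ≤ 1 then (1:ℝ) else 0) := by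
        intro z
        rw [if_pos (le_trans (hfrange z.1).2 hv1.le), if_pos (hfrange z.1).2]
      rw [integral_congr_ae (ae_of_all _ hz)]
      exact le_csSup hbdd ⟨1, ⟨zero_le_one, le_rfl⟩, rfl⟩
  have hA : |∫ z, (lab z.2 - p z.1) ∂μ| ≤ K := by
    have hz : ∀ z : X × Bool, (lab z.2 - p z.1) =
        (lab z.2 - p z.1) * (if f z.1 ≤ 1 then (1:ℝ) else 0) := by
      intro z
      rw [if_pos (hfrange z.1).2, mul_one]
    rw [integral_congr_ae (ae_of_all _ hz)]
    exact hthr 1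
  -- the Jordan decomposition of the discrete derivative
  have hevar : eVariationOn (fun q => ℓ q true - ℓ q false) (Icc 0 1) ≤ ENNReal.ofReal 2 :=
    evar_bound ℓ hLBV
  have hbv : LocallyBoundedVariationOn (fun q => ℓ q true - ℓ q false) (Icc 0 1) :=
    BoundedVariationOn.locallyBoundedVariationOn (ne_top_of_le_ne_top ENNReal.ofReal_ne_top hevar)
  set c : ℝ → ℝ := fun q => max 0 (min 1 q) with hcdef
  have hcmono : Monotone c := fun a b hab => max_le_max le_rfl (min_le_min le_rfl hab)
  have hcmem : ∀ q, c q ∈ Icc (0:ℝ) 1 :=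
    fun q => ⟨le_max_left _ _, max_le zero_le_one (min_le_left _ _)⟩
  have hcid : ∀ q ∈ Icc (0:ℝ) 1, c q = q := by
    intro q hq
    rw [hcdef]
    simp only
    rw [min_eq_right hq.2, max_eq_right hq.1]
  have h0mem : (0:ℝ) ∈ Icc (0:ℝ) 1 := ⟨le_rfl, zero_le_one⟩
  set P : ℝ → ℝ := fun q => variationOnFromTo (fun q => ℓ q true - ℓ q false) (Icc 0 1) 0 (c q)
    with hPdef
  set Q : ℝ → ℝ := fun q => P q - (ℓ (c q) true - ℓ (c q) false) with hQdef
  have hPmono : Monotone P :=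
    fun a b hab => variationOnFromTo.monotoneOn hbv h0mem (hcmem a) (hcmem b) (hcmono hab)
  have hQmono : Monotone Q :=
    fun a b hab => variationOnFromTo.sub_self_monotoneOn hbv h0mem (hcmem a) (hcmem b) (hcmono hab)
  have hc0 : c 0 = 0 := hcid 0 h0mem
  have hc1 : c 1 = 1 := hcid 1 ⟨zero_le_one, le_rfl⟩
  have hP0 : P 0 = 0 := by rw [hPdef]; simp only; rw [hc0, variationOnFromTo.self]
  have hP1 : P 1 ≤ 2 := by
    rw [hPdef]
    simp only
    rw [hc1, variationOnFromTo.eq_of_le _ _ zero_le_one, Set.inter_self]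
    exact ENNReal.toReal_le_of_le_ofReal (by norm_num) hevar
  have hh1 : |ℓ (1:ℝ) true - ℓ (1:ℝ) false| ≤ 2 := by
    have ht := hLbdd 1 ⟨zero_le_one, le_rfl⟩ true
    have hf := hLbdd 1 ⟨zero_le_one, le_rfl⟩ false
    rw [abs_le]
    constructor <;> linarith [ht.1, ht.2, hf.1, hf.2]
  have htriv : ∀ y : Bool, |ℓ (1:ℝ) y - ℓ (0:ℝ) y| ≤ 1 := by
    intro y
    apply hLBV y
    refine ⟨1, fun i => if i = 0 then 0 else 1, rfl, rfl, ?_, ?_⟩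
    · intro i hi
      have : i = 0 := by omega
      subst this
      norm_num
    · rw [Finset.sum_range_one]
      norm_num
  have hhd : |(ℓ (1:ℝ) true - ℓ (1:ℝ) false) - (ℓ (0:ℝ) true - ℓ (0:ℝ) false)| ≤ 2 := by
    have ht := abs_le.mp (htriv true)
    have hf := abs_le.mp (htriv false)
    rw [abs_le]
    constructor <;> linarith [ht.1, ht.2, hf.1, hf.2]
  -- apply the layer-cake bound to P and Q
  have hPbound := mono_piece μ hwmeas hwb hFmeas hFr P hPmono hK0 hthr
  have hQbound := mono_piece μ hwmeas hwb hFmeas hFr Q hQmono hK0 hthr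
  have hiP : Integrable (fun z : X × Bool => (lab z.2 - p z.1) * P (f z.1)) μ :=
    integrable_mono_comp μ hwmeas hwb hFmeas hFr P hPmono
  have hiQ : Integrable (fun z : X × Bool => (lab z.2 - p z.1) * Q (f z.1)) μ :=
    integrable_mono_comp μ hwmeas hwb hFmeas hFr Q hQmono
  have hsplit : ∫ z, (lab z.2 - p z.1) * (ℓ (f z.1) true - ℓ (f z.1) false) ∂μ =
      ∫ z, (lab z.2 - p z.1) * P (f z.1) ∂μ - ∫ z, (lab z.2 - p z.1) * Q (f z.1) ∂μ := by
    rw [← integral_sub hiP hiQ]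
    apply integral_congr_ae
    apply ae_of_all
    intro z
    have hcz : c (f z.1) = f z.1 := hcid _ (hfrange z.1)
    rw [hQdef]
    simp only
    rw [hcz]
    ring
  have hPQ1 : P 1 - Q 1 = ℓ (1:ℝ) true - ℓ (1:ℝ) false := by
    rw [hQdef]
    simp only
    rw [hc1]
    ring
  have hmain : |∫ z, (lab z.2 - p z.1) * (ℓ (f z.1) true - ℓ (f z.1) false) ∂μ| ≤ 8 * K := by
    have e1 : ∫ z, (lab z.2 - p z.1) * (ℓ (f z.1) true - ℓ (f z.1) false) ∂μ =
        (∫ z, (lab z.2 - p z.1) * P (f z.1) ∂μ - P 1 * ∫ z, (lab z.2 - p z.1) ∂μ) -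
        (∫ z, (lab z.2 - p z.1) * Q (f z.1) ∂μ - Q 1 * ∫ z, (lab z.2 - p z.1) ∂μ) +
        (P 1 - Q 1) * ∫ z, (lab z.2 - p z.1) ∂μ := by
      rw [hsplit]; ring
    rw [e1, hPQ1]
    have t1 := hPbound
    have t2 := hQbound
    have t3 : |(ℓ (1:ℝ) true - ℓ (1:ℝ) false) * ∫ z, (lab z.2 - p z.1) ∂μ| ≤ 2 * K := by
      rw [abs_mul]
      exact mul_le_mul hh1 hA (abs_nonneg _) (by norm_num)
    have hPK : (P 1 - P 0) * K ≤ 2 * K := by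
      apply mul_le_mul_of_nonneg_right _ hK0
      rw [hP0]
      linarith
    have hQK : (Q 1 - Q 0) * K ≤ 4 * K := by
      apply mul_le_mul_of_nonneg_right _ hK0
      have hQ1 : Q 1 = P 1 - (ℓ (1:ℝ) true - ℓ (1:ℝ) false) := by
        rw [hQdef]; simp only; rw [hc1]
      have hQ0 : Q 0 = P 0 - (ℓ (0:ℝ) true - ℓ (0:ℝ) false) := by
        rw [hQdef]; simp only; rw [hc0]
      have := abs_le.mp hhd
      rw [hQ1, hQ0, hP0]
      linarith [this.1, this.2]
    calc |(∫ z, (lab z.2 - p z.1) * P (f z.1) ∂μ - P 1 * ∫ z, (lab z.2 - p z.1) ∂μ) -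
        (∫ z, (lab z.2 - p z.1) * Q (f z.1) ∂μ - Q 1 * ∫ z, (lab z.2 - p z.1) ∂μ) +
        (ℓ (1:ℝ) true - ℓ (1:ℝ) false) * ∫ z, (lab z.2 - p z.1) ∂μ|
        ≤ |(∫ z, (lab z.2 - p z.1) * P (f z.1) ∂μ - P 1 * ∫ z, (lab z.2 - p z.1) ∂μ) -
          (∫ z, (lab z.2 - p z.1) * Q (f z.1) ∂μ - Q 1 * ∫ z, (lab z.2 - p z.1) ∂μ)| +
          |(ℓ (1:ℝ) true - ℓ (1:ℝ) false) * ∫ z, (lab z.2 - p z.1) ∂μ| := abs_add_le _ _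
      _ ≤ |∫ z, (lab z.2 - p z.1) * P (f z.1) ∂μ - P 1 * ∫ z, (lab z.2 - p z.1) ∂μ| +
          |∫ z, (lab z.2 - p z.1) * Q (f z.1) ∂μ - Q 1 * ∫ z, (lab z.2 - p z.1) ∂μ| +
          |(ℓ (1:ℝ) true - ℓ (1:ℝ) false) * ∫ z, (lab z.2 - p z.1) ∂μ| := by
            have := abs_sub (∫ z, (lab z.2 - p z.1) * P (f z.1) ∂μ -
              P 1 * ∫ z, (lab z.2 - p z.1) ∂μ)
              (∫ z, (lab z.2 - p z.1) * Q (f z.1) ∂μ - Q 1 * ∫ z, (lab z.2 - p z.1) ∂μ)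
            linarith
      _ ≤ (P 1 - P 0) * K + (Q 1 - Q 0) * K + 2 * K := by linarith
      _ ≤ 2 * K + 4 * K + 2 * K := by linarith
      _ = 8 * K := by ring
  have hεs : 0 ≤ ε * Real.sqrt (1 / Pg D g) := mul_nonneg hε.le (Real.sqrt_nonneg _)
  linarith

end
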